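/- Let μ_1 and μ_2 be two independent random probability vectors, each uniformly distributed on the simplex Λ_N. Then the expected affinity satisfies E(A(μ_1, μ_2)) = N · ((N−1)! · Γ(3/2) / Γ(N + 1/2))². -/

import Mathlib

open MeasureTheory

/-- The uniform probability measure on the simplex `Λ_N`, i.e. the normalized
Lebesgue (Hausdorff) measure on the standard simplex in `ℝ^N`. -/
noncomputable def uniformSimplex (N : ℕ) : Measure (Fin N → ℝ) :=
  (μH[(N : ℝ) - 1] (stdSimplex ℝ (Fin N)))⁻¹ •
    (μH[(N : ℝ) - 1]).restrict (stdSimplex ℝ (Fin N))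

/-- The affinity `A(μ, ν) = ∑_α √(μ_α ν_α)` of two probability vectors. -/
noncomputable def affinity {N : ℕ} (μ ν : Fin N → ℝ) : ℝ :=
  ∑ α, Real.sqrt (μ α * ν α)

open Set
open scoped ENNReal NNReal Pointwise

noncomputable section

def Dset (n : ℕ) : Set (Fin n → ℝ) := {x | (∀ i, 0 ≤ x i) ∧ ∑ i, x i ≤ 1}

lemma measurableSet_Dset (n : ℕ) : MeasurableSet (Dset n) := by
  have h1 : MeasurableSet {x : Fin n → ℝ | ∀ i, 0 ≤ x i} := by
    rw [Set.setOf_forall]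
    exact MeasurableSet.iInter fun i =>
      measurableSet_le measurable_const (measurable_pi_apply i)
  have h2 : MeasurableSet {x : Fin n → ℝ | ∑ i, x i ≤ 1} :=
    measurableSet_le (by fun_prop) measurable_const
  exact h1.inter h2

lemma cont_rpow_const {a : ℝ} (ha : 0 ≤ a) : Continuous fun x : ℝ => x ^ a :=
  continuous_iff_continuousAt.2 fun x => Real.continuousAt_rpow_const x a (Or.inr ha)

lemma meas_ofReal_rpow {n : ℕ} (a : ℝ) (ha : 0 ≤ a) :
    Measurable fun x : Fin n → ℝ => ENNReal.ofReal ((1 - ∑ i, x i) ^ a) :=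
  ENNReal.measurable_ofReal.comp ((cont_rpow_const ha).measurable.comp (by fun_prop))

lemma measurable_snoc {n : ℕ} :
    Measurable fun p : ℝ × (Fin n → ℝ) => (Fin.snoc p.2 p.1 : Fin (n+1) → ℝ) := by
  rw [measurable_pi_iff]
  intro i
  induction i using Fin.lastCases with
  | last => simpa [Fin.snoc_last] using measurable_fst
  | cast i => simpa [Fin.snoc_castSucc] using (by fun_prop : Measurable fun x : ℝ × (Fin n → ℝ) => x.2 i)

lemma lint_slice (a m : ℝ) (ha : 0 ≤ a) (hm : 0 ≤ m) :
    ∫⁻ t : ℝ, Set.indicator (Set.Icc 0 m)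
        (fun t => ENNReal.ofReal ((m - t) ^ a)) t
      = ENNReal.ofReal (m ^ (a + 1) / (a + 1)) := by
  rw [lintegral_indicator measurableSet_Icc]
  rw [← ofReal_integral_eq_lintegral_ofReal]
  · congr 1
    rw [MeasureTheory.integral_Icc_eq_integral_Ioc, ← intervalIntegral.integral_of_le hm]
    have := intervalIntegral.integral_comp_sub_left (a := 0) (b := m) (fun x : ℝ => x ^ a) m
    rw [this]
    simp only [sub_zero, sub_self]
    rw [integral_rpow (Or.inl (by linarith))]
    rw [Real.zero_rpow (by linarith)]
    ring
  · exact ((cont_rpow_const ha).comp (continuous_const.sub continuous_id)).integrableOn_Icc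
  · exact (ae_restrict_iff' measurableSet_Icc).2 (ae_of_all _ fun t ht =>
      Real.rpow_nonneg (by linarith [ht.2]) a)

lemma lint_pow_Dset (n : ℕ) : ∀ a : ℝ, 0 ≤ a →
    ∫⁻ x : Fin n → ℝ, Set.indicator (Dset n)
        (fun x => ENNReal.ofReal ((1 - ∑ i, x i) ^ a)) x
      = ENNReal.ofReal (Real.Gamma (a + 1) / Real.Gamma (n + a + 1)) := by
  induction n with
  | zero =>
    intro a ha
    have hD : Dset 0 = Set.univ := by
      ext x
      simp [Dset]
    rw [hD, Set.indicator_univ]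
    simp only [Finset.univ_eq_empty, Finset.sum_empty, sub_zero, Real.one_rpow]
    rw [lintegral_const]
    have hv : (volume : Measure (Fin 0 → ℝ)) Set.univ = 1 := by
      rw [volume_pi, Measure.pi_univ]
      simp
    rw [hv]
    rw [Nat.cast_zero, zero_add, div_self (Real.Gamma_pos_of_pos (by linarith : (0:ℝ) < a + 1)).ne']
    simp
  | succ n ih =>
    intro a ha
    set F : (Fin (n+1) → ℝ) → ℝ≥0∞ :=
      Set.indicator (Dset (n+1)) (fun x => ENNReal.ofReal ((1 - ∑ i, x i) ^ a)) with hF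
    have hFmeas : Measurable F :=
      (meas_ofReal_rpow a ha).indicator (measurableSet_Dset (n+1))
    have hmp := (volume_preserving_piFinSuccAbove (fun _ : Fin (n+1) => ℝ) (Fin.last n)).symm
    rw [← hmp.lintegral_comp hFmeas]
    have hsymm : ∀ p : ℝ × (Fin n → ℝ),
        (MeasurableEquiv.piFinSuccAbove (fun _ : Fin (n+1) => ℝ) (Fin.last n)).symm p
          = Fin.snoc p.2 p.1 := by
      intro p
      simp [MeasurableEquiv.piFinSuccAbove_symm_apply, Fin.insertNthEquiv]
    have hkey : ∀ p : ℝ × (Fin n → ℝ), F (Fin.snoc p.2 p.1)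
        = Set.indicator (Dset n) (fun y =>
            Set.indicator (Set.Icc 0 (1 - ∑ i, y i))
              (fun t => ENNReal.ofReal ((1 - ∑ i, y i - t) ^ a)) p.1) p.2 := by
      rintro ⟨t, y⟩
      have hsum : ∑ i, (Fin.snoc y t : Fin (n+1) → ℝ) i = ∑ i, y i + t := by
        rw [Fin.sum_univ_castSucc]
        simp
      have hmem : (Fin.snoc y t : Fin (n+1) → ℝ) ∈ Dset (n+1)
          ↔ y ∈ Dset n ∧ t ∈ Set.Icc 0 (1 - ∑ i, y i) := by
        simp only [Dset, Set.mem_setOf_eq, Set.mem_Icc, hsum]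
        constructor
        · rintro ⟨h1, h2⟩
          have h0t : 0 ≤ t := by simpa using h1 (Fin.last n)
          have hyi : ∀ i, 0 ≤ y i := fun i => by simpa using h1 (Fin.castSucc i)
          exact ⟨⟨hyi, by linarith⟩, h0t, by linarith⟩
        · rintro ⟨⟨hyi, _⟩, h0t, hts⟩
          refine ⟨fun i => ?_, by linarith⟩
          induction i using Fin.lastCases with
          | last => simpa using h0t
          | cast i => simpa using hyi i
      simp only [hF]
      by_cases hy : y ∈ Dset n
      · by_cases ht : t ∈ Set.Icc 0 (1 - ∑ i, y i)
        · rw [Set.indicator_of_mem (hmem.2 ⟨hy, ht⟩), Set.indicator_of_mem hy,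
            Set.indicator_of_mem ht, hsum, sub_add_eq_sub_sub]
        · rw [Set.indicator_of_notMem (fun h => ht (hmem.1 h).2), Set.indicator_of_mem hy,
            Set.indicator_of_notMem ht]
      · rw [Set.indicator_of_notMem (fun h => hy (hmem.1 h).1), Set.indicator_of_notMem hy]
    have hmeas : Measurable fun p : ℝ × (Fin n → ℝ) =>
        Set.indicator (Dset n) (fun y =>
            Set.indicator (Set.Icc 0 (1 - ∑ i, y i))
              (fun t => ENNReal.ofReal ((1 - ∑ i, y i - t) ^ a)) p.1) p.2 := by
      have : (fun p : ℝ × (Fin n → ℝ) =>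
          Set.indicator (Dset n) (fun y =>
            Set.indicator (Set.Icc 0 (1 - ∑ i, y i))
              (fun t => ENNReal.ofReal ((1 - ∑ i, y i - t) ^ a)) p.1) p.2)
          = fun p : ℝ × (Fin n → ℝ) => F (Fin.snoc p.2 p.1) := by
        funext p
        rw [hkey p]
      rw [this]
      exact hFmeas.comp measurable_snoc
    calc ∫⁻ p : ℝ × (Fin n → ℝ),
          F ((MeasurableEquiv.piFinSuccAbove (fun _ : Fin (n+1) => ℝ) (Fin.last n)).symm p)
        = ∫⁻ p : ℝ × (Fin n → ℝ), Set.indicator (Dset n) (fun y =>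
            Set.indicator (Set.Icc 0 (1 - ∑ i, y i))
              (fun t => ENNReal.ofReal ((1 - ∑ i, y i - t) ^ a)) p.1) p.2 := by
          congr 1
          funext p
          rw [hsymm p, hkey p]
      _ = ∫⁻ y : Fin n → ℝ, ∫⁻ t : ℝ, Set.indicator (Dset n) (fun y =>
            Set.indicator (Set.Icc 0 (1 - ∑ i, y i))
              (fun t => ENNReal.ofReal ((1 - ∑ i, y i - t) ^ a)) t) y := by
          rw [MeasureTheory.Measure.volume_eq_prod,
            MeasureTheory.lintegral_prod_symm _ hmeas.aemeasurable]
      _ = ∫⁻ y : Fin n → ℝ, Set.indicator (Dset n)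
            (fun y => ENNReal.ofReal ((1 - ∑ i, y i) ^ (a+1) / (a+1))) y := by
          congr 1
          funext y
          by_cases hy : y ∈ Dset n
          · simp only [Set.indicator_of_mem hy]
            exact lint_slice a (1 - ∑ i, y i) ha (by linarith [hy.2])
          · simp only [Set.indicator_of_notMem hy, lintegral_zero]
      _ = ENNReal.ofReal (1/(a+1)) * ∫⁻ y : Fin n → ℝ, Set.indicator (Dset n)
            (fun y => ENNReal.ofReal ((1 - ∑ i, y i) ^ (a+1))) y := by
          rw [← lintegral_const_mul]
          · congr 1
            funext y
            by_cases hy : y ∈ Dset n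
            · simp only [Set.indicator_of_mem hy]
              rw [← ENNReal.ofReal_mul (by positivity)]
              ring_nf
            · simp [Set.indicator_of_notMem hy]
          · exact (meas_ofReal_rpow (a+1) (by linarith)).indicator (measurableSet_Dset n)
      _ = ENNReal.ofReal (1/(a+1)) * ENNReal.ofReal (Real.Gamma (a+1+1) / Real.Gamma (↑n + (a+1) + 1)) := by
          rw [ih (a+1) (by linarith)]
      _ = ENNReal.ofReal (Real.Gamma (a + 1) / Real.Gamma (↑(n+1) + a + 1)) := by
          rw [← ENNReal.ofReal_mul (by positivity)]
          congr 1
          have harg : ((n+1:ℕ):ℝ) + a + 1 = ↑n + (a+1) + 1 := by push_cast; ring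
          rw [harg, Real.Gamma_add_one (by positivity)]
          have h1 : (0:ℝ) < a + 1 := by linarith
          have h2 : (0:ℝ) < Real.Gamma (↑n + (a+1) + 1) := Real.Gamma_pos_of_pos (by positivity)
          field_simp

/-! ### Stage 2: identification of the uniform measure on the simplex -/

noncomputable def Tmap (n : ℕ) : (Fin n → ℝ) → (Fin (n+1) → ℝ) :=
  fun x => Fin.snoc x (1 - ∑ i, x i)

lemma measurable_Tmap (n : ℕ) : Measurable (Tmap n) :=
  measurable_snoc.comp ((by fun_prop : Measurable fun x : Fin n → ℝ => 1 - ∑ i, x i).prodMk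
    measurable_id)

lemma Tmap_preimage_simplex (n : ℕ) :
    Tmap n ⁻¹' (stdSimplex ℝ (Fin (n+1))) = Dset n := by
  ext x
  have hsum : ∑ i, (Fin.snoc x (1 - ∑ i, x i) : Fin (n+1) → ℝ) i = 1 := by
    rw [Fin.sum_univ_castSucc]
    simp
  simp only [Tmap, Set.mem_preimage, stdSimplex, Set.mem_setOf_eq, hsum, Dset, and_true]
  constructor
  · intro h1
    have h2 : (0:ℝ) ≤ 1 - ∑ i, x i := by simpa using h1 (Fin.last n)
    exact ⟨fun i => by simpa using h1 (Fin.castSucc i), by linarith⟩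
  · rintro ⟨h1, h2⟩
    intro i
    induction i using Fin.lastCases with
    | last => simpa using by linarith
    | cast i => simpa using h1 i

noncomputable def Lmap (n : ℕ) : (Fin n → ℝ) →ₗ[ℝ] (Fin (n+1) → ℝ) where
  toFun x := Fin.snoc x (-∑ i, x i)
  map_add' x y := by
    funext i
    induction i using Fin.lastCases with
    | last => simp [Fin.snoc_last, Finset.sum_add_distrib]; ring
    | cast i => simp [Fin.snoc_castSucc]
  map_smul' c x := by
    funext i
    induction i using Fin.lastCases with
    | last => simp [Fin.snoc_last, Finset.mul_sum]
    | cast i => simp [Fin.snoc_castSucc]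

lemma restrict_eq (n : ℕ) : ∃ c : ℝ≥0∞, c ≠ 0 ∧ c ≠ ∞ ∧
    (μH[(n:ℝ)] : Measure (Fin (n+1) → ℝ)).restrict (stdSimplex ℝ (Fin (n+1)))
      = c • Measure.map (Tmap n) (volume.restrict (Dset n)) := by
  classical
  set ℓ : (Fin (n+1) → ℝ) →ₗ[ℝ] ℝ := ∑ i, LinearMap.proj i with hℓ
  have hℓ_apply : ∀ x : Fin (n+1) → ℝ, ℓ x = ∑ i, x i := by
    intro x
    simp [hℓ, LinearMap.sum_apply]
  set Sub := LinearMap.ker ℓ with hSub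
  have hsurj : LinearMap.range ℓ = ⊤ := by
    rw [LinearMap.range_eq_top]
    intro c
    refine ⟨Fin.snoc (0 : Fin n → ℝ) c, ?_⟩
    rw [hℓ_apply, Fin.sum_univ_castSucc]
    simp
  have hrank : Module.finrank ℝ Sub = n := by
    have h := LinearMap.finrank_range_add_finrank_ker ℓ
    rw [hsurj, finrank_top] at h
    simp only [Module.finrank_self, Module.finrank_fin_fun] at h
    rw [hSub]
    omega
  haveI : Measure.IsAddHaarMeasure (μH[(n:ℝ)] : Measure Sub) := by
    have h : ((Module.finrank ℝ Sub : ℕ) : ℝ) = (n:ℝ) := by rw [hrank]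
    rw [← h]
    infer_instance
  -- the linear equivalence
  have hL_mem : ∀ x, Lmap n x ∈ Sub := by
    intro x
    simp only [hSub, LinearMap.mem_ker, hℓ_apply, Lmap, LinearMap.coe_mk, AddHom.coe_mk]
    rw [Fin.sum_univ_castSucc]
    simp
  set Lr : (Fin n → ℝ) →ₗ[ℝ] Sub := (Lmap n).codRestrict Sub hL_mem with hLr
  have hLr_coe : ∀ x, (Lr x : Fin (n+1) → ℝ) = Fin.snoc x (-∑ i, x i) := fun x => rfl
  have hinj : Function.Injective Lr := by
    intro x y hxy
    funext i
    have h := congrArg (fun f : Sub => (f : Fin (n+1) → ℝ) (Fin.castSucc i)) hxy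
    simpa [hLr_coe, Fin.snoc_castSucc] using h
  have hsurjr : Function.Surjective Lr := by
    rintro ⟨f, hf⟩
    rw [LinearMap.mem_ker, hℓ_apply] at hf
    refine ⟨fun i => f (Fin.castSucc i), Subtype.ext ?_⟩
    rw [hLr_coe]
    funext i
    induction i using Fin.lastCases with
    | last =>
      rw [Fin.snoc_last]
      rw [Fin.sum_univ_castSucc] at hf
      linarith
    | cast i => rw [Fin.snoc_castSucc]
  set eL : (Fin n → ℝ) ≃ₗ[ℝ] Sub := LinearEquiv.ofBijective Lr ⟨hinj, hsurjr⟩ with heL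
  set ν : Measure Sub := Measure.map eL volume with hν
  haveI : Measure.IsAddHaarMeasure ν := Measure.MapLinearEquiv.isAddHaarMeasure _ eL
  set c0 : ℝ≥0 := Measure.addHaarScalarFactor (μH[(n:ℝ)] : Measure Sub) ν with hc0def
  have hc0 : 0 < c0 := Measure.addHaarScalarFactor_pos_of_isAddHaarMeasure _ _
  have huniq : (μH[(n:ℝ)] : Measure Sub) = c0 • ν :=
    Measure.isAddLeftInvariant_eq_smul _ _
  refine ⟨(c0 : ℝ≥0∞), by exact_mod_cast hc0.ne', ENNReal.coe_ne_top, ?_⟩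
  have hTmeas := measurable_Tmap n
  have heL_meas : Measurable (eL : (Fin n → ℝ) → Sub) :=
    (LinearMap.continuous_of_finiteDimensional (eL : (Fin n → ℝ) →ₗ[ℝ] Sub)).measurable
  have hcoe_meas : Measurable ((↑) : Sub → (Fin (n+1) → ℝ)) := continuous_subtype_val.measurable
  have hS_meas : MeasurableSet (stdSimplex ℝ (Fin (n+1))) :=
    (isClosed_stdSimplex _ _).measurableSet
  set S := stdSimplex ℝ (Fin (n+1)) with hSdef
  set v : Fin (n+1) → ℝ := Fin.snoc (0 : Fin n → ℝ) 1 with hv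
  have hvsum : ∑ i, v i = 1 := by
    rw [hv, Fin.sum_univ_castSucc]
    simp
  have hTv : ∀ x, Tmap n x = v + (Lr x : Fin (n+1) → ℝ) := by
    intro x
    rw [hLr_coe]
    funext i
    induction i using Fin.lastCases with
    | last => simp [Tmap, Fin.snoc_last, hv]; ring
    | cast i => simp [Tmap, Fin.snoc_castSucc, hv]
  ext A hA
  rw [Measure.smul_apply, Measure.map_apply hTmeas hA, Measure.restrict_apply hA,
    Measure.restrict_apply (hTmeas hA)]
  set B := (-v) +ᵥ (A ∩ S) with hB
  have hB_meas : MeasurableSet B := (hA.inter hS_meas).const_vadd (-v)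
  have h1 : μH[(n:ℝ)] (A ∩ S) = μH[(n:ℝ)] B := by
    rw [hB]
    exact (hausdorffMeasure_vadd (-v) (Or.inl (by positivity)) _).symm
  have hB_sub : B ⊆ Set.range ((↑) : Sub → (Fin (n+1) → ℝ)) := by
    rintro x ⟨y, ⟨hyA, hyS⟩, rfl⟩
    rw [Subtype.range_coe]
    show (-v) +ᵥ y ∈ Sub
    rw [hSub]
    rw [LinearMap.mem_ker, hℓ_apply]
    have hy1 : ∑ i, y i = 1 := hyS.2
    have : ∀ i, ((-v) +ᵥ y) i = -(v i) + y i := fun i => rfl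
    simp only [this, Finset.sum_add_distrib, Finset.sum_neg_distrib, hvsum, hy1]
    ring
  have h2 : (μH[(n:ℝ)] : Measure Sub) (((↑) : Sub → (Fin (n+1) → ℝ)) ⁻¹' B) = μH[(n:ℝ)] B := by
    rw [isometry_subtype_coe.hausdorffMeasure_preimage (Or.inl (by positivity)),
      Set.inter_eq_self_of_subset_left hB_sub]
  have h3 : (μH[(n:ℝ)] : Measure Sub) (((↑) : Sub → (Fin (n+1) → ℝ)) ⁻¹' B)
      = (c0 : ℝ≥0∞) * ν (((↑) : Sub → (Fin (n+1) → ℝ)) ⁻¹' B) := by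
    rw [huniq, Measure.smul_apply]
    rfl
  have h4 : ν (((↑) : Sub → (Fin (n+1) → ℝ)) ⁻¹' B)
      = volume ((eL : (Fin n → ℝ) → Sub) ⁻¹' (((↑) : Sub → (Fin (n+1) → ℝ)) ⁻¹' B)) := by
    rw [hν, Measure.map_apply heL_meas (hcoe_meas hB_meas)]
  have hset : (eL : (Fin n → ℝ) → Sub) ⁻¹' (((↑) : Sub → (Fin (n+1) → ℝ)) ⁻¹' B)
      = Tmap n ⁻¹' A ∩ Dset n := by
    have hDint : Tmap n ⁻¹' A ∩ Dset n = Tmap n ⁻¹' (A ∩ S) := by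
      rw [hSdef, Set.preimage_inter, Tmap_preimage_simplex]
    rw [hDint]
    ext x
    have hcoe : ((eL x : Sub) : Fin (n+1) → ℝ) = (Lr x : Fin (n+1) → ℝ) := rfl
    simp only [Set.mem_preimage, hcoe]
    constructor
    · rintro ⟨y, hy, hey⟩
      have : y = Tmap n x := by
        rw [hTv]
        rw [← hey]
        funext i
        show y i = (v + ((-v) + y)) i
        simp
      rwa [← this]
    · intro hx
      refine ⟨Tmap n x, hx, ?_⟩
      rw [hTv]
      funext i
      show (-v + (v + (Lr x : Fin (n+1) → ℝ))) i = _
      simp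
  rw [h1, ← h2, h3, h4, hset]
  rfl

lemma volume_Dset (n : ℕ) :
    (volume (Dset n)) = ENNReal.ofReal (1 / n.factorial) := by
  have h := lint_pow_Dset n 0 le_rfl
  simp only [Real.rpow_zero] at h
  rw [lintegral_indicator (measurableSet_Dset n), setLIntegral_const, ENNReal.ofReal_one,
    one_mul] at h
  rw [h]
  congr 1
  rw [show (0:ℝ) + 1 = 1 by ring, Real.Gamma_one,
    show (n:ℝ) + 0 + 1 = (n : ℝ) + 1 by ring, Real.Gamma_nat_eq_factorial]

lemma volume_Dset_pos (n : ℕ) : 0 < volume (Dset n) := by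
  rw [volume_Dset]
  exact ENNReal.ofReal_pos.2 (by positivity)

lemma volume_Dset_ne_top (n : ℕ) : volume (Dset n) ≠ ∞ := by
  rw [volume_Dset]; exact ENNReal.ofReal_ne_top

lemma uniformSimplex_eq_map (n : ℕ) :
    uniformSimplex (n+1) = Measure.map (Tmap n)
      ((volume (Dset n))⁻¹ • volume.restrict (Dset n)) := by
  obtain ⟨c, hc0, hctop, hres⟩ := restrict_eq n
  have hdim : ((n+1 : ℕ) : ℝ) - 1 = (n : ℝ) := by push_cast; ring
  have hSval : μH[((n+1 : ℕ) : ℝ) - 1] (stdSimplex ℝ (Fin (n+1)))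
      = c * volume (Dset n) := by
    rw [hdim]
    have := congrArg (fun μ : Measure (Fin (n+1) → ℝ) => μ Set.univ) hres
    simp only [Measure.restrict_apply_univ, Measure.smul_apply, smul_eq_mul] at this
    rw [this, Measure.map_apply (measurable_Tmap n) MeasurableSet.univ]
    simp
  have hvol0 := (volume_Dset_pos n).ne'
  have hvoltop := volume_Dset_ne_top n
  rw [uniformSimplex, hSval]
  rw [show (μH[((n+1 : ℕ) : ℝ) - 1] : Measure (Fin (n+1) → ℝ)).restrict (stdSimplex ℝ (Fin (n+1)))
      = c • Measure.map (Tmap n) (volume.restrict (Dset n)) by rw [hdim]; exact hres]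
  rw [Measure.map_smul]
  rw [smul_smul]
  congr 1
  rw [ENNReal.mul_inv (Or.inl hc0) (Or.inl hctop)]
  rw [mul_comm c⁻¹ _, mul_assoc, ENNReal.inv_mul_cancel hc0 hctop, mul_one]

/-! ### Stage 3 -/

noncomputable def permIso (N : ℕ) (σ : Equiv.Perm (Fin N)) : (Fin N → ℝ) ≃ᵢ (Fin N → ℝ) :=
  IsometryEquiv.piCongrLeft' (Y := fun _ : Fin N => ℝ) σ.symm

lemma permIso_apply (N : ℕ) (σ : Equiv.Perm (Fin N)) (f : Fin N → ℝ) :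
    permIso N σ f = f ∘ σ := rfl

lemma map_perm_uniform (N : ℕ) (σ : Equiv.Perm (Fin N)) :
    Measure.map (fun p : Fin N → ℝ => p ∘ σ) (uniformSimplex N) = uniformSimplex N := by
  have hco : (fun p : Fin N → ℝ => p ∘ σ) = ⇑(permIso N σ) := rfl
  have hS_meas : MeasurableSet (stdSimplex ℝ (Fin N)) := (isClosed_stdSimplex _ _).measurableSet
  have hpre : ⇑(permIso N σ) ⁻¹' (stdSimplex ℝ (Fin N)) = stdSimplex ℝ (Fin N) := by
    ext f
    simp only [Set.mem_preimage, permIso_apply, stdSimplex, Set.mem_setOf_eq,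
      Function.comp_apply]
    constructor
    · rintro ⟨h1, h2⟩
      refine ⟨fun i => by simpa using h1 (σ.symm i), ?_⟩
      rwa [Equiv.sum_comp σ (fun i => f i)] at h2
    · rintro ⟨h1, h2⟩
      exact ⟨fun i => h1 (σ i), by rwa [Equiv.sum_comp σ (fun i => f i)]⟩
  have hres : Measure.map (⇑(permIso N σ)) ((μH[(N:ℝ)-1]).restrict (stdSimplex ℝ (Fin N)))
      = (μH[(N:ℝ)-1]).restrict (stdSimplex ℝ (Fin N)) := by
    conv_lhs => rw [← hpre]
    rw [← Measure.restrict_map (permIso N σ).continuous.measurable hS_meas]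
    rw [show Measure.map (⇑(permIso N σ)) (μH[(N:ℝ)-1]) = μH[(N:ℝ)-1] from
      (permIso N σ).map_hausdorffMeasure _]
  rw [hco, uniformSimplex, Measure.map_smul, hres]
lemma lint_perm (N : ℕ) (σ : Equiv.Perm (Fin N)) (α : Fin N) :
    ∫⁻ p, ENNReal.ofReal (Real.sqrt (p (σ α))) ∂(uniformSimplex N)
      = ∫⁻ p, ENNReal.ofReal (Real.sqrt (p α)) ∂(uniformSimplex N) := by
  have hm : ∀ β : Fin N, Measurable fun p : Fin N → ℝ => ENNReal.ofReal (Real.sqrt (p β)) :=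
    fun β => ENNReal.measurable_ofReal.comp
      (Real.continuous_sqrt.measurable.comp (measurable_pi_apply β))
  conv_rhs => rw [← map_perm_uniform N σ]
  rw [lintegral_map (hm α) (by fun_prop : Measurable fun p : Fin N → ℝ => p ∘ σ)]
  rfl

theorem stmt2 (N : ℕ) (hN : 1 ≤ N) :
    ∫ p : (Fin N → ℝ) × (Fin N → ℝ), affinity p.1 p.2
        ∂((uniformSimplex N).prod (uniformSimplex N)) =
      (N : ℝ) * ((Nat.factorial (N - 1) : ℝ) * Real.Gamma (3 / 2) /
        Real.Gamma ((N : ℝ) + 1 / 2)) ^ 2 := by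
  obtain ⟨n, rfl⟩ : ∃ n, N = n + 1 := ⟨N - 1, by omega⟩
  have hvol0 := (volume_Dset_pos n).ne'
  have hvoltop := volume_Dset_ne_top n
  set P : Measure (Fin n → ℝ) := (volume (Dset n))⁻¹ • volume.restrict (Dset n) with hP
  haveI hPprob : IsProbabilityMeasure P := by
    constructor
    rw [hP, Measure.smul_apply, Measure.restrict_apply_univ, smul_eq_mul,
      ENNReal.inv_mul_cancel hvol0 hvoltop]
  have hU : uniformSimplex (n+1) = Measure.map (Tmap n) P := uniformSimplex_eq_map n
  set U := uniformSimplex (n+1) with hUdef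
  haveI : IsProbabilityMeasure U := by
    rw [hUdef, uniformSimplex_eq_map n]
    exact Measure.isProbabilityMeasure_map (measurable_Tmap n).aemeasurable
  set S := stdSimplex ℝ (Fin (n+1)) with hSdef
  have hS_meas : MeasurableSet S := (isClosed_stdSimplex _ _).measurableSet
  have hmα : ∀ α : Fin (n+1), Measurable fun p : Fin (n+1) → ℝ =>
      ENNReal.ofReal (Real.sqrt (p α)) := fun α =>
    ENNReal.measurable_ofReal.comp (Real.continuous_sqrt.measurable.comp (measurable_pi_apply α))
  have hmmul : ∀ α : Fin (n+1), Measurable fun q : (Fin (n+1) → ℝ) × (Fin (n+1) → ℝ) =>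
      ENNReal.ofReal (Real.sqrt (q.1 α * q.2 α)) := fun α => by fun_prop
  -- step 1 : integral to lintegral
  have h_nonneg : 0 ≤ᵐ[U.prod U] fun p : (Fin (n+1) → ℝ) × (Fin (n+1) → ℝ) =>
      affinity p.1 p.2 :=
    ae_of_all _ fun p => Finset.sum_nonneg fun α _ => Real.sqrt_nonneg _
  have h_contaff : Continuous fun p : (Fin (n+1) → ℝ) × (Fin (n+1) → ℝ) =>
      affinity p.1 p.2 := by
    unfold affinity
    exact continuous_finset_sum _ fun α _ => Real.continuous_sqrt.comp
      (((continuous_apply α).comp continuous_fst).mul ((continuous_apply α).comp continuous_snd))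
  rw [integral_eq_lintegral_of_nonneg_ae h_nonneg h_contaff.aestronglyMeasurable]
  -- step 2: expand the sum
  have hexp : ∀ p : (Fin (n+1) → ℝ) × (Fin (n+1) → ℝ),
      ENNReal.ofReal (affinity p.1 p.2)
        = ∑ α, ENNReal.ofReal (Real.sqrt (p.1 α * p.2 α)) := fun p =>
    ENNReal.ofReal_sum_of_nonneg fun α _ => Real.sqrt_nonneg _
  simp only [hexp]
  rw [lintegral_finset_sum _ (fun α _ => hmmul α)]
  -- step 3: a.e. factorization on the product
  have hSfull : U Sᶜ = 0 := by
    rw [hUdef, uniformSimplex, Measure.smul_apply, Measure.restrict_apply hS_meas.compl,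
      Set.compl_inter_self, measure_empty, smul_zero]
  have hae : ∀ᵐ q ∂(U.prod U), q.1 ∈ S ∧ q.2 ∈ S := by
    rw [Filter.eventually_and]
    constructor
    · rw [MeasureTheory.ae_iff]
      have hs : {q : (Fin (n+1) → ℝ) × (Fin (n+1) → ℝ) | ¬ q.1 ∈ S} = Sᶜ ×ˢ Set.univ := by
        ext q; simp
      rw [hs, Measure.prod_prod, hSfull, zero_mul]
    · rw [MeasureTheory.ae_iff]
      have hs : {q : (Fin (n+1) → ℝ) × (Fin (n+1) → ℝ) | ¬ q.2 ∈ S} = Set.univ ×ˢ Sᶜ := by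
        ext q; simp
      rw [hs, Measure.prod_prod, hSfull, mul_zero]
  have hfac : ∀ α : Fin (n+1),
      ∫⁻ q, ENNReal.ofReal (Real.sqrt (q.1 α * q.2 α)) ∂(U.prod U)
        = (∫⁻ p, ENNReal.ofReal (Real.sqrt (p α)) ∂U)
          * (∫⁻ p, ENNReal.ofReal (Real.sqrt (p α)) ∂U) := by
    intro α
    have hcongr : (fun q : (Fin (n+1) → ℝ) × (Fin (n+1) → ℝ) =>
          ENNReal.ofReal (Real.sqrt (q.1 α * q.2 α)))
        =ᵐ[U.prod U] fun q => ENNReal.ofReal (Real.sqrt (q.1 α)) *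
          ENNReal.ofReal (Real.sqrt (q.2 α)) := by
      filter_upwards [hae] with q hq
      rw [Real.sqrt_mul (hq.1.1 α), ENNReal.ofReal_mul (Real.sqrt_nonneg _)]
    rw [lintegral_congr_ae hcongr,
      lintegral_prod_mul (hmα α).aemeasurable (hmα α).aemeasurable]
  -- step 4: symmetry
  set I := ∫⁻ p, ENNReal.ofReal (Real.sqrt (p (Fin.last n))) ∂U with hI
  have hsym : ∀ α : Fin (n+1), ∫⁻ p, ENNReal.ofReal (Real.sqrt (p α)) ∂U = I := by
    intro α
    rw [hI, hUdef]
    have h := lint_perm (n+1) (Equiv.swap α (Fin.last n)) α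
    rw [Equiv.swap_apply_left] at h
    exact h.symm
  have hterm : ∀ α : Fin (n+1),
      ∫⁻ q, ENNReal.ofReal (Real.sqrt (q.1 α * q.2 α)) ∂(U.prod U) = I * I := fun α => by
    rw [hfac α, hsym α]
  rw [Finset.sum_congr rfl (fun α _ => hterm α), Finset.sum_const, Finset.card_univ,
    Fintype.card_fin]
  -- step 5: compute I
  have hIval : I = ENNReal.ofReal ((n.factorial : ℝ) *
      (Real.Gamma (1/2 + 1) / Real.Gamma ((n:ℝ) + 1/2 + 1))) := by
    rw [hI, hUdef, uniformSimplex_eq_map n, lintegral_map (hmα _) (measurable_Tmap n)]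
    have hlast : ∀ x : Fin n → ℝ, Tmap n x (Fin.last n) = 1 - ∑ i, x i := by
      intro x
      simp [Tmap]
    simp only [hlast]
    rw [lintegral_smul_measure, ← lintegral_indicator (measurableSet_Dset n)]
    have heq : (fun x => Set.indicator (Dset n)
          (fun x : Fin n → ℝ => ENNReal.ofReal (Real.sqrt (1 - ∑ i, x i))) x)
        = fun x => Set.indicator (Dset n)
          (fun x : Fin n → ℝ => ENNReal.ofReal ((1 - ∑ i, x i) ^ ((1:ℝ)/2))) x := by
      funext x
      congr 1
      funext y
      rw [Real.sqrt_eq_rpow]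
    rw [heq, lint_pow_Dset n (1/2) (by norm_num), volume_Dset]
    rw [one_div ((n.factorial : ℝ)), ENNReal.ofReal_inv_of_pos (by positivity), inv_inv,
      smul_eq_mul, ← ENNReal.ofReal_mul (by positivity)]
  -- step 6: final arithmetic
  rw [hIval]
  have hΓpos : (0:ℝ) < Real.Gamma ((n:ℝ) + 1/2 + 1) := Real.Gamma_pos_of_pos (by positivity)
  set q : ℝ := (n.factorial : ℝ) * (Real.Gamma (1/2 + 1) / Real.Gamma ((n:ℝ) + 1/2 + 1)) with hq
  have hq0 : 0 ≤ q := by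
    rw [hq]
    have := Real.Gamma_pos_of_pos (show (0:ℝ) < 1/2 + 1 by norm_num)
    positivity
  rw [← ENNReal.ofReal_mul hq0, nsmul_eq_mul, ENNReal.toReal_mul, ENNReal.toReal_natCast,
    ENNReal.toReal_ofReal (by positivity)]
  have h1 : ((n + 1 : ℕ) : ℝ) + 1/2 = (n:ℝ) + 1/2 + 1 := by push_cast; ring
  have h2 : (3:ℝ)/2 = 1/2 + 1 := by norm_num
  rw [h1, h2, Nat.add_sub_cancel]
  rw [hq]
  ring
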